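/- Let G be a finite simple graph, let f be a Roman dominating function on G, and let A be a two-neighbour packing of G. Then |A| ≤ Σ_{v∈V(G)} f(v), i.e., the size of any two-neighbour packing is at most the weight of any Roman dominating function. -/
import Mathlib


open SimpleGraph

/-- The closed neighbourhood `N[v]` of a vertex `v`: `v` together with its neighbours. -/
def closedNbhd {V : Type*} (G : SimpleGraph V) (v : V) : Set V :=
  insert v (G.neighborSet v)

/-- A Roman dominating function on `G`: a map into `{0,1,2}` such that every vertex with
value `0` has a neighbour with value `2`. -/
def IsRomanDominating {V : Type*} (G : SimpleGraph V) (f : V → ℕ) : Prop :=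
  (∀ v, f v ≤ 2) ∧ ∀ v, f v = 0 → ∃ u, G.Adj v u ∧ f u = 2

/-- A two-neighbour packing of `G`: a set of vertices such that every closed
neighbourhood contains at most two of its members. -/
def IsTwoNbrPacking {V : Type*} (G : SimpleGraph V) (A : Set V) : Prop :=
  ∀ v, (closedNbhd G v ∩ A).ncard ≤ 2

theorem weak_duality_pointwise {V : Type*} [Fintype V] (G : SimpleGraph V)
    (f : V → ℕ) (hf : IsRomanDominating G f)
    (A : Set V) (hA : IsTwoNbrPacking G A) :
    A.ncard ≤ ∑ v, f v := by
  classical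
  -- choice of a 2-neighbour for each 0-vertex
  set g : V → V := fun a => if h : f a = 0 then Classical.choose (hf.2 a h) else a with hg
  have hgadj : ∀ a, f a = 0 → G.Adj a (g a) ∧ f (g a) = 2 := by
    intro a h
    simp only [hg, dif_pos h]
    exact Classical.choose_spec (hf.2 a h)
  set A' : Finset V := A.toFinset with hA'
  set A1 : Finset V := A'.filter (fun a => f a = 0) with hA1
  set A2 : Finset V := A'.filter (fun a => f a ≠ 0) with hA2
  set T : Finset V := Finset.univ.filter (fun u => f u = 2) with hT
  have hcard : A.ncard = A'.card := by
    rw [hA', Set.ncard_eq_toFinset_card']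
  have hsplit : A'.card = A1.card + A2.card := by
    rw [hA1, hA2]
    exact (Finset.card_filter_add_card_filter_not (fun a => f a = 0)).symm
  -- A1 maps into T
  have hgmem : ∀ a ∈ A1, g a ∈ T := by
    intro a ha
    rw [hA1, Finset.mem_filter] at ha
    rw [hT, Finset.mem_filter]
    exact ⟨Finset.mem_univ _, (hgadj a ha.2).2⟩
  have hfib : A1.card = ∑ u ∈ T, (A1.filter (fun a => g a = u)).card :=
    Finset.card_eq_sum_card_fiberwise hgmem
  -- bound on each fiber together with the indicator of u ∈ A2
  have hkey : ∀ u ∈ T, (A1.filter (fun a => g a = u)).card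
      + (if u ∈ A2 then 1 else 0) ≤ 2 := by
    intro u hu
    rw [hT, Finset.mem_filter] at hu
    have hS : ((closedNbhd G u ∩ A).toFinset).card ≤ 2 := by
      rw [← Set.ncard_eq_toFinset_card']
      exact hA u
    have hsub : A1.filter (fun a => g a = u) ⊆ (closedNbhd G u ∩ A).toFinset := by
      intro a ha
      rw [Finset.mem_filter, hA1, Finset.mem_filter] at ha
      obtain ⟨⟨haA, haf⟩, hgu⟩ := ha
      have hadj := (hgadj a haf).1
      rw [hgu] at hadj
      rw [Set.mem_toFinset]
      refine ⟨Set.mem_insert_of_mem _ ?_, by rwa [hA', Set.mem_toFinset] at haA⟩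
      exact hadj.symm
    by_cases huA : u ∈ A2
    · simp only [if_pos huA]
      have hunot : u ∉ A1.filter (fun a => g a = u) := by
        intro h
        rw [Finset.mem_filter, hA1, Finset.mem_filter] at h
        have := h.1.2
        omega
      have : insert u (A1.filter (fun a => g a = u)) ⊆ (closedNbhd G u ∩ A).toFinset := by
        intro x hx
        rcases Finset.mem_insert.1 hx with rfl | hx
        · rw [Set.mem_toFinset]
          refine ⟨Set.mem_insert _ _, ?_⟩
          rw [hA2, Finset.mem_filter, hA', Set.mem_toFinset] at huA
          exact huA.1
        · exact hsub hx
      have := Finset.card_le_card this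
      rw [Finset.card_insert_of_notMem hunot] at this
      omega
    · simp only [if_neg huA, Nat.add_zero]
      exact le_trans (Finset.card_le_card hsub) hS
  have h1 : A1.card + (A2 ∩ T).card ≤ ∑ u ∈ T, f u := by
    have hind : (A2 ∩ T).card = ∑ u ∈ T, (if u ∈ A2 then 1 else 0) := by
      rw [Finset.inter_comm, Finset.card_eq_sum_ones, ← Finset.sum_filter]
      rfl
    calc A1.card + (A2 ∩ T).card
        = ∑ u ∈ T, ((A1.filter (fun a => g a = u)).card + (if u ∈ A2 then 1 else 0)) := by
          rw [hfib, hind, Finset.sum_add_distrib]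
      _ ≤ ∑ u ∈ T, 2 := Finset.sum_le_sum hkey
      _ = ∑ u ∈ T, f u := by
          apply Finset.sum_congr rfl
          intro u hu
          rw [hT, Finset.mem_filter] at hu
          omega
  have h2 : (A2 \ T).card ≤ ∑ u ∈ A2 \ T, f u := by
    rw [Finset.card_eq_sum_ones]
    apply Finset.sum_le_sum
    intro u hu
    rw [Finset.mem_sdiff, hA2, Finset.mem_filter] at hu
    omega
  have hA2split : A2.card = (A2 ∩ T).card + (A2 \ T).card :=
    (Finset.card_inter_add_card_sdiff A2 T).symm
  have hdisj : Disjoint T (A2 \ T) := Finset.disjoint_sdiff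
  calc A.ncard = A1.card + ((A2 ∩ T).card + (A2 \ T).card) := by
        rw [hcard, hsplit, hA2split]
    _ = (A1.card + (A2 ∩ T).card) + (A2 \ T).card := by ring
    _ ≤ (∑ u ∈ T, f u) + ∑ u ∈ A2 \ T, f u := Nat.add_le_add h1 h2
    _ = ∑ u ∈ T ∪ (A2 \ T), f u := (Finset.sum_union hdisj).symm
    _ ≤ ∑ v, f v := Finset.sum_le_sum_of_subset (Finset.subset_univ _)
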